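/- Let T > 0, τ > 0, and set t_n = nτ. Let β₁, β₂ ∈ (0,1), a₁, a₂, b ≥ 0, R > 0, and let (φⁿ) be a sequence of real numbers with 0 ≤ φⁿ ≤ R for all n ≥ 1 with t_n ≤ T. Suppose that φⁿ ≤ a₁ t_n^{−1} + a₂ t_n^{β₁−1} + b τ Σ_{j=2}^{n} t_{n−j+1}^{β₂−1} φ^{j−1} for all n ≥ 1 with 0 < t_n ≤ T (the sum being empty for n = 1). Then there exists a constant c = c(b, β₁, β₂, T, R), independent of τ, n, a₁ and a₂, such that φⁿ ≤ c ( a₁ t_n^{−1} (1 + |log τ|) + a₂ t_n^{β₁−1} ) for all n ≥ 1 with 0 < t_n ≤ T. -/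

import Mathlib

section GronwallAux
open Finset


lemma sum_rpow_le {γ τ : ℝ} (hγ0 : 0 < γ) (hγ1 : γ ≤ 1) (hτ : 0 < τ) (N : ℕ) :
    ∑ k ∈ Icc 1 N, τ * ((k : ℝ) * τ) ^ (γ - 1) ≤ ((N : ℝ) * τ) ^ γ / γ := by
  induction N with
  | zero => simp [Real.zero_rpow hγ0.ne']
  | succ N ih =>
    rw [Finset.sum_Icc_succ_top (by omega)]
    have ha : (0:ℝ) < ((N:ℕ)+1 : ℝ) * τ := by positivity
    set a : ℝ := ((N:ℝ)+1) * τ with ha_def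
    have hba : (N:ℝ) * τ = a - τ := by ring
    -- key : τ * a ^ (γ-1) ≤ (a^γ - (a-τ)^γ)/γ
    have key : γ * (τ * a ^ (γ - 1)) ≤ a ^ γ - (a - τ) ^ γ := by
      have hs : -1 ≤ -(τ / a) := by
        rw [neg_le_neg_iff]
        exact (div_le_one ha).2 (by nlinarith)
      have hBern := rpow_one_add_le_one_add_mul_self hs hγ0.le hγ1
      have h1 : (1 + -(τ/a)) = (a - τ)/a := by field_simp; ring
      rw [h1] at hBern
      have h2 : ((a - τ)/a) ^ γ = (a-τ)^γ / a^γ := by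
        rw [Real.div_rpow (by nlinarith) ha.le]
      rw [h2] at hBern
      have haγ : (0:ℝ) < a ^ γ := Real.rpow_pos_of_pos ha γ
      have h3 : (a-τ)^γ ≤ (1 + γ * -(τ/a)) * a ^ γ := by
        calc (a-τ)^γ = ((a-τ)^γ / a^γ) * a^γ := by field_simp
        _ ≤ _ := by nlinarith
      have h4 : (1 + γ * -(τ/a)) * a ^ γ = a ^ γ - γ * (τ * (a ^ γ / a)) := by
        field_simp; ring
      rw [h4] at h3
      have h5 : a ^ γ / a = a ^ (γ - 1) := by
        rw [Real.rpow_sub_one ha.ne']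
      rw [h5] at h3
      linarith
    push_cast
    rw [hba] at ih
    have h6 : τ * a ^ (γ-1) ≤ (a^γ - (a-τ)^γ)/γ := by
      rw [le_div_iff₀ hγ0]; nlinarith
    have h7 : (a - τ)^γ/γ + (a^γ - (a-τ)^γ)/γ = a^γ/γ := by ring
    linarith

lemma harmonic_le (N : ℕ) : ∑ k ∈ Icc 1 N, ((k:ℝ))⁻¹ ≤ 1 + Real.log N := by
  induction N with
  | zero => simp
  | succ N ih =>
    rcases Nat.eq_zero_or_pos N with h0 | hpos
    · subst h0; simp
    · rw [Finset.sum_Icc_succ_top (by omega)]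
      have hlog : ((N:ℝ)+1)⁻¹ ≤ Real.log ((N:ℝ)+1) - Real.log N := by
        have hN : (0:ℝ) < N := by exact_mod_cast hpos
        have hx : (0:ℝ) < (N:ℝ)/((N:ℝ)+1) := by positivity
        have := Real.log_le_sub_one_of_pos hx
        rw [Real.log_div hN.ne' (by positivity)] at this
        have : Real.log N - Real.log ((N:ℝ)+1) ≤ (N:ℝ)/((N:ℝ)+1) - 1 := this
        have h2 : (N:ℝ)/((N:ℝ)+1) - 1 = -(((N:ℝ)+1)⁻¹) := by field_simp; ring
        linarith [this, h2 ▸ this]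
      push_cast
      linarith

lemma sum_reindex (n : ℕ) (g f : ℕ → ℝ) :
    ∑ j ∈ Icc 2 n, g (n - j + 1) * f (j - 1) = ∑ k ∈ Icc 1 (n-1), g (n - k) * f k := by
  apply Finset.sum_nbij' (fun j => j - 1) (fun k => k + 1)
  · intro a ha; simp only [Finset.mem_Icc] at *; omega
  · intro a ha; simp only [Finset.mem_Icc] at *; omega
  · intro a ha; simp only [Finset.mem_Icc] at ha; omega
  · intro a ha; simp only [Finset.mem_Icc] at ha; omega
  · intro j hj
    simp only [Finset.mem_Icc] at hj
    have : n - j + 1 = n - (j - 1) := by omega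
    rw [this]


lemma sum_reindex2 (n : ℕ) (g f : ℕ → ℝ) :
    ∑ k ∈ Icc 1 (n-1), g (n - k) * f (n - k) = ∑ k ∈ Icc 1 (n-1), g k * f k := by
  apply Finset.sum_nbij' (fun k => n - k) (fun k => n - k)
  · intro a ha; simp only [Finset.mem_Icc] at *; omega
  · intro a ha; simp only [Finset.mem_Icc] at *; omega
  · intro a ha; simp only [Finset.mem_Icc] at ha; omega
  · intro a ha; simp only [Finset.mem_Icc] at ha; omega
  · intro a ha; rfl

lemma sum_kernel_le {α τ : ℝ} (hα0 : 0 < α) (hα1 : α ≤ 1) (hτ : 0 < τ) (n : ℕ)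
    (hn : 1 ≤ n) :
    ∑ k ∈ Icc 1 (n-1), τ * (((n-k : ℕ) : ℝ)*τ) ^ (α-1) ≤ ((n:ℝ)*τ)^α/α := by
  have h1 : ∑ k ∈ Icc 1 (n-1), τ * (((n-k : ℕ) : ℝ)*τ) ^ (α-1)
      = ∑ k ∈ Icc 1 (n-1), τ * (((k : ℕ) : ℝ)*τ) ^ (α-1) := by
    have := sum_reindex2 n (fun k => τ * (((k:ℕ):ℝ)*τ)^(α-1)) (fun _ => 1)
    simpa using this
  rw [h1]
  calc ∑ k ∈ Icc 1 (n-1), τ * ((k : ℝ)*τ) ^ (α-1) ≤ (((n-1 : ℕ):ℝ)*τ)^α/α :=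
        sum_rpow_le hα0 hα1 hτ (n-1)
    _ ≤ ((n:ℝ)*τ)^α/α := by
        gcongr
        omega

lemma beta_sum {a g τ : ℝ} (ha0 : 0 < a) (ha1 : a < 1) (hg0 : 0 < g) (hg1 : g ≤ 1)
    (hτ : 0 < τ) (n : ℕ) (hn : 1 ≤ n) :
    ∑ k ∈ Icc 1 (n-1), τ * (((n-k : ℕ) : ℝ)*τ) ^ (a-1) * ((k:ℝ)*τ) ^ (g-1)
      ≤ ((2:ℝ)^(1-a)/g + 2^(1-g)/a) * ((n:ℝ)*τ)^(a+g-1) := by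
  have hnτ : (0:ℝ) < (n:ℝ)*τ := by
    have : (0:ℝ) < (n:ℝ) := by exact_mod_cast hn
    positivity
  rw [← Finset.sum_filter_add_sum_filter_not (Icc 1 (n-1)) (fun k => 2*k ≤ n)]
  have hA : ∑ k ∈ (Icc 1 (n-1)).filter (fun k => 2*k ≤ n),
      τ * (((n-k : ℕ) : ℝ)*τ) ^ (a-1) * ((k:ℝ)*τ) ^ (g-1)
      ≤ ((n:ℝ)*τ/2)^(a-1) * (((n:ℝ)*τ)^g/g) := by
    calc ∑ k ∈ (Icc 1 (n-1)).filter (fun k => 2*k ≤ n),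
        τ * (((n-k : ℕ) : ℝ)*τ) ^ (a-1) * ((k:ℝ)*τ) ^ (g-1)
        ≤ ∑ k ∈ (Icc 1 (n-1)).filter (fun k => 2*k ≤ n),
          ((n:ℝ)*τ/2)^(a-1) * (τ * ((k:ℝ)*τ) ^ (g-1)) := by
          apply Finset.sum_le_sum
          intro k hk
          simp only [Finset.mem_filter, Finset.mem_Icc] at hk
          have hker : (((n-k : ℕ) : ℝ)*τ) ^ (a-1) ≤ ((n:ℝ)*τ/2)^(a-1) := by
            apply Real.rpow_le_rpow_of_nonpos (by positivity) ?_ (by linarith)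
            have hc : ((n:ℝ)/2) ≤ ((n-k:ℕ):ℝ) := by
              rw [Nat.cast_sub (by omega)]
              have : (2*(k:ℝ)) ≤ (n:ℝ) := by exact_mod_cast hk.2
              linarith
            nlinarith
          have h2 : (0:ℝ) ≤ τ * ((k:ℝ)*τ) ^ (g-1) := by positivity
          calc τ * (((n-k : ℕ) : ℝ)*τ) ^ (a-1) * ((k:ℝ)*τ) ^ (g-1)
              = (((n-k : ℕ) : ℝ)*τ) ^ (a-1) * (τ * ((k:ℝ)*τ) ^ (g-1)) := by ring
            _ ≤ _ := mul_le_mul_of_nonneg_right hker h2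
      _ ≤ ((n:ℝ)*τ/2)^(a-1) * (((n:ℝ)*τ)^g/g) := by
          rw [← Finset.mul_sum]
          apply mul_le_mul_of_nonneg_left ?_ (by positivity)
          calc ∑ k ∈ (Icc 1 (n-1)).filter (fun k => 2*k ≤ n), τ * ((k:ℝ)*τ) ^ (g-1)
              ≤ ∑ k ∈ Icc 1 (n-1), τ * ((k:ℝ)*τ) ^ (g-1) :=
                Finset.sum_le_sum_of_subset_of_nonneg (Finset.filter_subset _ _)
                  (fun k _ _ => by positivity)
            _ ≤ (((n-1:ℕ):ℝ)*τ)^g/g := sum_rpow_le hg0 hg1 hτ (n-1)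
            _ ≤ ((n:ℝ)*τ)^g/g := by
                gcongr
                omega
  have hB : ∑ k ∈ (Icc 1 (n-1)).filter (fun k => ¬ 2*k ≤ n),
      τ * (((n-k : ℕ) : ℝ)*τ) ^ (a-1) * ((k:ℝ)*τ) ^ (g-1)
      ≤ ((n:ℝ)*τ/2)^(g-1) * (((n:ℝ)*τ)^a/a) := by
    calc ∑ k ∈ (Icc 1 (n-1)).filter (fun k => ¬ 2*k ≤ n),
        τ * (((n-k : ℕ) : ℝ)*τ) ^ (a-1) * ((k:ℝ)*τ) ^ (g-1)
        ≤ ∑ k ∈ (Icc 1 (n-1)).filter (fun k => ¬ 2*k ≤ n),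
          ((n:ℝ)*τ/2)^(g-1) * (τ * (((n-k:ℕ):ℝ)*τ) ^ (a-1)) := by
          apply Finset.sum_le_sum
          intro k hk
          simp only [Finset.mem_filter, Finset.mem_Icc] at hk
          have hker : (((k : ℕ) : ℝ)*τ) ^ (g-1) ≤ ((n:ℝ)*τ/2)^(g-1) := by
            apply Real.rpow_le_rpow_of_nonpos (by positivity) ?_ (by linarith)
            have : (n:ℝ) ≤ 2*(k:ℝ) := by exact_mod_cast Nat.le_of_lt_succ (by omega)
            nlinarith
          have h2 : (0:ℝ) ≤ τ * (((n-k:ℕ):ℝ)*τ) ^ (a-1) := by positivity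
          calc τ * (((n-k : ℕ) : ℝ)*τ) ^ (a-1) * ((k:ℝ)*τ) ^ (g-1)
              = ((k:ℝ)*τ) ^ (g-1) * (τ * (((n-k:ℕ):ℝ)*τ) ^ (a-1)) := by ring
            _ ≤ _ := mul_le_mul_of_nonneg_right hker h2
      _ ≤ ((n:ℝ)*τ/2)^(g-1) * (((n:ℝ)*τ)^a/a) := by
          rw [← Finset.mul_sum]
          apply mul_le_mul_of_nonneg_left ?_ (by positivity)
          calc ∑ k ∈ (Icc 1 (n-1)).filter (fun k => ¬ 2*k ≤ n), τ * (((n-k:ℕ):ℝ)*τ) ^ (a-1)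
              ≤ ∑ k ∈ Icc 1 (n-1), τ * (((n-k:ℕ):ℝ)*τ) ^ (a-1) :=
                Finset.sum_le_sum_of_subset_of_nonneg (Finset.filter_subset _ _)
                  (fun k _ _ => by positivity)
            _ ≤ ((n:ℝ)*τ)^a/a := sum_kernel_le ha0 ha1.le hτ n hn
  have hEq1 : ((n:ℝ)*τ/2)^(a-1) * (((n:ℝ)*τ)^g/g) = (2:ℝ)^(1-a)/g * ((n:ℝ)*τ)^(a+g-1) := by
    rw [Real.div_rpow hnτ.le (by norm_num : (0:ℝ) ≤ 2)]
    rw [show (1:ℝ)-a = -(a-1) by ring, Real.rpow_neg (by norm_num : (0:ℝ) ≤ 2)]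
    rw [show a+g-1 = (a-1)+g by ring, Real.rpow_add hnτ]
    have h2 : ((2:ℝ))^(a-1) ≠ 0 := ne_of_gt (Real.rpow_pos_of_pos (by norm_num) _)
    field_simp
  have hEq2 : ((n:ℝ)*τ/2)^(g-1) * (((n:ℝ)*τ)^a/a) = (2:ℝ)^(1-g)/a * ((n:ℝ)*τ)^(a+g-1) := by
    rw [Real.div_rpow hnτ.le (by norm_num : (0:ℝ) ≤ 2)]
    rw [show (1:ℝ)-g = -(g-1) by ring, Real.rpow_neg (by norm_num : (0:ℝ) ≤ 2)]
    rw [show a+g-1 = (g-1)+a by ring, Real.rpow_add hnτ]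
    have h2 : ((2:ℝ))^(g-1) ≠ 0 := ne_of_gt (Real.rpow_pos_of_pos (by norm_num) _)
    field_simp
  rw [hEq1] at hA
  rw [hEq2] at hB
  have := add_le_add hA hB
  linarith [this]


lemma log_sum {b2 τ : ℝ} (hb0 : 0 < b2) (hb1 : b2 < 1) (hτ : 0 < τ)
    (n : ℕ) (hn : 1 ≤ n) :
    ∑ k ∈ Icc 1 (n-1), τ * (((n-k : ℕ) : ℝ)*τ) ^ (b2-1) * ((k:ℝ)*τ)⁻¹
      ≤ ((2:ℝ)^(1-b2) * (1 + Real.log n) + 2/b2) * ((n:ℝ)*τ)^(b2-1) := by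
  have hnτ : (0:ℝ) < (n:ℝ)*τ := by
    have : (0:ℝ) < (n:ℝ) := by exact_mod_cast hn
    positivity
  rw [← Finset.sum_filter_add_sum_filter_not (Icc 1 (n-1)) (fun k => 2*k ≤ n)]
  have hA : ∑ k ∈ (Icc 1 (n-1)).filter (fun k => 2*k ≤ n),
      τ * (((n-k : ℕ) : ℝ)*τ) ^ (b2-1) * ((k:ℝ)*τ)⁻¹
      ≤ ((n:ℝ)*τ/2)^(b2-1) * (1 + Real.log n) := by
    calc ∑ k ∈ (Icc 1 (n-1)).filter (fun k => 2*k ≤ n),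
        τ * (((n-k : ℕ) : ℝ)*τ) ^ (b2-1) * ((k:ℝ)*τ)⁻¹
        ≤ ∑ k ∈ (Icc 1 (n-1)).filter (fun k => 2*k ≤ n),
          ((n:ℝ)*τ/2)^(b2-1) * ((k:ℝ))⁻¹ := by
          apply Finset.sum_le_sum
          intro k hk
          simp only [Finset.mem_filter, Finset.mem_Icc] at hk
          have hkpos : (0:ℝ) < (k:ℝ) := by exact_mod_cast hk.1.1
          have hker : (((n-k : ℕ) : ℝ)*τ) ^ (b2-1) ≤ ((n:ℝ)*τ/2)^(b2-1) := by
            apply Real.rpow_le_rpow_of_nonpos (by positivity) ?_ (by linarith)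
            have hc : ((n:ℝ)/2) ≤ ((n-k:ℕ):ℝ) := by
              rw [Nat.cast_sub (by omega)]
              have : (2*(k:ℝ)) ≤ (n:ℝ) := by exact_mod_cast hk.2
              linarith
            nlinarith
          have heq : τ * (((n-k : ℕ) : ℝ)*τ) ^ (b2-1) * ((k:ℝ)*τ)⁻¹
              = (((n-k : ℕ) : ℝ)*τ) ^ (b2-1) * ((k:ℝ))⁻¹ := by
            rw [mul_inv]
            field_simp
          rw [heq]
          exact mul_le_mul_of_nonneg_right hker (by positivity)
      _ ≤ ((n:ℝ)*τ/2)^(b2-1) * (1 + Real.log n) := by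
          rw [← Finset.mul_sum]
          apply mul_le_mul_of_nonneg_left ?_ (by positivity)
          calc ∑ k ∈ (Icc 1 (n-1)).filter (fun k => 2*k ≤ n), ((k:ℝ))⁻¹
              ≤ ∑ k ∈ Icc 1 (n-1), ((k:ℝ))⁻¹ :=
                Finset.sum_le_sum_of_subset_of_nonneg (Finset.filter_subset _ _)
                  (fun k _ _ => by positivity)
            _ ≤ 1 + Real.log (n-1 : ℕ) := harmonic_le (n-1)
            _ ≤ 1 + Real.log n := by
                gcongr 1 + ?_
                rcases Nat.eq_zero_or_pos (n-1) with h0 | hpos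
                · rw [h0]
                  simp only [Nat.cast_zero, Real.log_zero]
                  exact Real.log_natCast_nonneg n
                · apply Real.log_le_log (by exact_mod_cast hpos)
                  exact_mod_cast Nat.sub_le n 1
  have hB : ∑ k ∈ (Icc 1 (n-1)).filter (fun k => ¬ 2*k ≤ n),
      τ * (((n-k : ℕ) : ℝ)*τ) ^ (b2-1) * ((k:ℝ)*τ)⁻¹
      ≤ 2*((n:ℝ)*τ)⁻¹ * (((n:ℝ)*τ)^b2/b2) := by
    calc ∑ k ∈ (Icc 1 (n-1)).filter (fun k => ¬ 2*k ≤ n),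
        τ * (((n-k : ℕ) : ℝ)*τ) ^ (b2-1) * ((k:ℝ)*τ)⁻¹
        ≤ ∑ k ∈ (Icc 1 (n-1)).filter (fun k => ¬ 2*k ≤ n),
          2*((n:ℝ)*τ)⁻¹ * (τ * (((n-k:ℕ):ℝ)*τ) ^ (b2-1)) := by
          apply Finset.sum_le_sum
          intro k hk
          simp only [Finset.mem_filter, Finset.mem_Icc] at hk
          have hkpos : (0:ℝ) < (k:ℝ) := by exact_mod_cast hk.1.1
          have hker : ((k:ℝ)*τ)⁻¹ ≤ 2*((n:ℝ)*τ)⁻¹ := by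
            have hnk : (n:ℝ) ≤ 2*(k:ℝ) := by exact_mod_cast Nat.le_of_lt_succ (by omega)
            rw [show 2*((n:ℝ)*τ)⁻¹ = ((n:ℝ)*τ/2)⁻¹ by field_simp]
            apply inv_anti₀ (by positivity)
            nlinarith
          calc τ * (((n-k : ℕ) : ℝ)*τ) ^ (b2-1) * ((k:ℝ)*τ)⁻¹
              = ((k:ℝ)*τ)⁻¹ * (τ * (((n-k:ℕ):ℝ)*τ) ^ (b2-1)) := by ring
            _ ≤ _ := mul_le_mul_of_nonneg_right hker (by positivity)
      _ ≤ 2*((n:ℝ)*τ)⁻¹ * (((n:ℝ)*τ)^b2/b2) := by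
          rw [← Finset.mul_sum]
          apply mul_le_mul_of_nonneg_left ?_ (by positivity)
          calc ∑ k ∈ (Icc 1 (n-1)).filter (fun k => ¬ 2*k ≤ n), τ * (((n-k:ℕ):ℝ)*τ) ^ (b2-1)
              ≤ ∑ k ∈ Icc 1 (n-1), τ * (((n-k:ℕ):ℝ)*τ) ^ (b2-1) :=
                Finset.sum_le_sum_of_subset_of_nonneg (Finset.filter_subset _ _)
                  (fun k _ _ => by positivity)
            _ ≤ ((n:ℝ)*τ)^b2/b2 := sum_kernel_le hb0 hb1.le hτ n hn
  have hEq1 : ((n:ℝ)*τ/2)^(b2-1) * (1 + Real.log n)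
      = (2:ℝ)^(1-b2) * (1 + Real.log n) * ((n:ℝ)*τ)^(b2-1) := by
    rw [Real.div_rpow hnτ.le (by norm_num : (0:ℝ) ≤ 2)]
    rw [show (1:ℝ)-b2 = -(b2-1) by ring, Real.rpow_neg (by norm_num : (0:ℝ) ≤ 2)]
    have h2 : ((2:ℝ))^(b2-1) ≠ 0 := ne_of_gt (Real.rpow_pos_of_pos (by norm_num) _)
    field_simp
  have hEq2 : 2*((n:ℝ)*τ)⁻¹ * (((n:ℝ)*τ)^b2/b2) = 2/b2 * ((n:ℝ)*τ)^(b2-1) := by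
    rw [Real.rpow_sub_one hnτ.ne']
    field_simp
  rw [hEq1] at hA
  rw [hEq2] at hB
  linarith [add_le_add hA hB]

lemma exp_sum {b2 τ μ δ T : ℝ} (hb0 : 0 < b2) (hb1 : b2 < 1) (hτ : 0 < τ)
    (hμ : 0 ≤ μ) (hδ : 0 < δ) (hT : 0 < T) (n : ℕ) (hn : 1 ≤ n)
    (hnT : (n:ℝ)*τ ≤ T) :
    ∑ k ∈ Icc 1 (n-1), τ * (((n-k : ℕ) : ℝ)*τ) ^ (b2-1) * Real.exp (μ*((k:ℝ)*τ))
      ≤ Real.exp (μ*((n:ℝ)*τ)) * (δ^b2/b2 + Real.exp (-(μ*δ))*(T^b2/b2)) := by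
  have hnτ : (0:ℝ) < (n:ℝ)*τ := by
    have : (0:ℝ) < (n:ℝ) := by exact_mod_cast hn
    positivity
  -- rewrite exp factor
  have hstep : ∀ k ∈ Icc 1 (n-1),
      τ * (((n-k : ℕ) : ℝ)*τ) ^ (b2-1) * Real.exp (μ*((k:ℝ)*τ))
      = Real.exp (μ*((n:ℝ)*τ)) *
        (τ * (((n-k : ℕ) : ℝ)*τ) ^ (b2-1) * Real.exp (-(μ*(((n-k:ℕ):ℝ)*τ)))) := by
    intro k hk
    simp only [Finset.mem_Icc] at hk
    have hcast : ((n-k:ℕ):ℝ) = (n:ℝ) - (k:ℝ) := by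
      rw [Nat.cast_sub (by omega)]
    rw [hcast, show μ*((k:ℝ)*τ) = μ*((n:ℝ)*τ) + -(μ*(((n:ℝ)-(k:ℝ))*τ)) by ring,
      Real.exp_add]
    ring
  rw [Finset.sum_congr rfl hstep, ← Finset.mul_sum]
  apply mul_le_mul_of_nonneg_left ?_ (Real.exp_nonneg _)
  -- reindex k ↦ n - k
  have hre : ∑ k ∈ Icc 1 (n-1),
      τ * (((n-k : ℕ) : ℝ)*τ) ^ (b2-1) * Real.exp (-(μ*(((n-k:ℕ):ℝ)*τ)))
      = ∑ k ∈ Icc 1 (n-1), τ * ((k : ℝ)*τ) ^ (b2-1) * Real.exp (-(μ*((k:ℝ)*τ))) := by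
    apply Finset.sum_nbij' (fun k => n - k) (fun k => n - k)
    · intro a ha; simp only [Finset.mem_Icc] at *; omega
    · intro a ha; simp only [Finset.mem_Icc] at *; omega
    · intro a ha; simp only [Finset.mem_Icc] at ha; omega
    · intro a ha; simp only [Finset.mem_Icc] at ha; omega
    · intro a ha; rfl
  rw [hre]
  rw [← Finset.sum_filter_add_sum_filter_not (Icc 1 (n-1)) (fun k : ℕ => (k:ℝ)*τ ≤ δ)]
  have hA : ∑ k ∈ (Icc 1 (n-1)).filter (fun k : ℕ => (k:ℝ)*τ ≤ δ),
      τ * ((k : ℝ)*τ) ^ (b2-1) * Real.exp (-(μ*((k:ℝ)*τ))) ≤ δ^b2/b2 := by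
    calc ∑ k ∈ (Icc 1 (n-1)).filter (fun k : ℕ => (k:ℝ)*τ ≤ δ),
        τ * ((k : ℝ)*τ) ^ (b2-1) * Real.exp (-(μ*((k:ℝ)*τ)))
        ≤ ∑ k ∈ (Icc 1 (n-1)).filter (fun k : ℕ => (k:ℝ)*τ ≤ δ), τ * ((k : ℝ)*τ) ^ (b2-1) := by
          apply Finset.sum_le_sum
          intro k hk
          simp only [Finset.mem_filter, Finset.mem_Icc] at hk
          have hexp1 : Real.exp (-(μ*((k:ℝ)*τ))) ≤ 1 := by
            rw [Real.exp_le_one_iff]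
            have : (0:ℝ) ≤ (k:ℝ)*τ := by positivity
            nlinarith
          have h0 : (0:ℝ) ≤ τ * ((k:ℝ)*τ) ^ (b2-1) := by positivity
          nlinarith [hexp1, h0]
      _ ≤ ∑ k ∈ Icc 1 (Nat.floor (δ/τ)), τ * ((k : ℝ)*τ) ^ (b2-1) := by
          apply Finset.sum_le_sum_of_subset_of_nonneg
          · intro k hk
            simp only [Finset.mem_filter, Finset.mem_Icc] at hk
            simp only [Finset.mem_Icc]
            refine ⟨hk.1.1, Nat.le_floor ?_⟩
            rw [le_div_iff₀ hτ]
            exact hk.2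
          · intro k _ _; positivity
      _ ≤ (((Nat.floor (δ/τ)):ℝ)*τ)^b2/b2 := sum_rpow_le hb0 hb1.le hτ _
      _ ≤ δ^b2/b2 := by
          have hKτ : ((Nat.floor (δ/τ)):ℝ)*τ ≤ δ := by
            calc ((Nat.floor (δ/τ)):ℝ)*τ ≤ (δ/τ)*τ :=
                mul_le_mul_of_nonneg_right (Nat.floor_le (by positivity)) hτ.le
              _ = δ := by field_simp
          gcongr
          all_goals first | positivity | exact hKτ
  have hB : ∑ k ∈ (Icc 1 (n-1)).filter (fun k : ℕ => ¬ (k:ℝ)*τ ≤ δ),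
      τ * ((k : ℝ)*τ) ^ (b2-1) * Real.exp (-(μ*((k:ℝ)*τ)))
      ≤ Real.exp (-(μ*δ))*(T^b2/b2) := by
    calc ∑ k ∈ (Icc 1 (n-1)).filter (fun k : ℕ => ¬ (k:ℝ)*τ ≤ δ),
        τ * ((k : ℝ)*τ) ^ (b2-1) * Real.exp (-(μ*((k:ℝ)*τ)))
        ≤ ∑ k ∈ (Icc 1 (n-1)).filter (fun k : ℕ => ¬ (k:ℝ)*τ ≤ δ),
          Real.exp (-(μ*δ)) * (τ * ((k : ℝ)*τ) ^ (b2-1)) := by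
          apply Finset.sum_le_sum
          intro k hk
          simp only [Finset.mem_filter, Finset.mem_Icc] at hk
          have hexp : Real.exp (-(μ*((k:ℝ)*τ))) ≤ Real.exp (-(μ*δ)) := by
            apply Real.exp_le_exp.mpr
            have := hk.2
            push_neg at this
            nlinarith
          calc τ * ((k : ℝ)*τ) ^ (b2-1) * Real.exp (-(μ*((k:ℝ)*τ)))
              = Real.exp (-(μ*((k:ℝ)*τ))) * (τ * ((k : ℝ)*τ) ^ (b2-1)) := by ring
            _ ≤ _ := mul_le_mul_of_nonneg_right hexp (by positivity)
      _ ≤ Real.exp (-(μ*δ))*(T^b2/b2) := by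
          rw [← Finset.mul_sum]
          apply mul_le_mul_of_nonneg_left ?_ (Real.exp_nonneg _)
          calc ∑ k ∈ (Icc 1 (n-1)).filter (fun k : ℕ => ¬ (k:ℝ)*τ ≤ δ), τ * ((k : ℝ)*τ) ^ (b2-1)
              ≤ ∑ k ∈ Icc 1 (n-1), τ * ((k : ℝ)*τ) ^ (b2-1) :=
                Finset.sum_le_sum_of_subset_of_nonneg (Finset.filter_subset _ _)
                  (fun k _ _ => by positivity)
            _ ≤ (((n-1:ℕ):ℝ)*τ)^b2/b2 := sum_rpow_le hb0 hb1.le hτ _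
            _ ≤ T^b2/b2 := by
                have hnT2 : ((n-1:ℕ):ℝ)*τ ≤ T := by
                  calc ((n-1:ℕ):ℝ)*τ ≤ (n:ℝ)*τ :=
                      mul_le_mul_of_nonneg_right
                        (by exact_mod_cast Nat.sub_le n 1) hτ.le
                    _ ≤ T := hnT
                gcongr
                all_goals first | positivity | exact hnT2
  linarith [add_le_add hA hB]


lemma rpow_le_Q {t T e : ℝ} (ht : 0 < t) (htT : t ≤ T) (he0 : 0 ≤ e) (he1 : e ≤ 1) :
    t^e ≤ max 1 T := by
  rcases le_or_gt t 1 with h | h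
  · exact le_trans (Real.rpow_le_one ht.le h he0) (le_max_left _ _)
  · calc t^e ≤ t^(1:ℝ) := Real.rpow_le_rpow_of_exponent_le h.le he1
      _ = t := Real.rpow_one t
      _ ≤ max 1 T := le_trans htT (le_max_right _ _)

lemma conv_rpow {b2 θ τ : ℝ} (hb0 : 0 < b2) (hb1 : b2 < 1) (hθ0 : 0 < θ) (hθ1 : θ ≤ 1)
    (hτ : 0 < τ) (n : ℕ) (hn : 1 ≤ n) :
    τ * ∑ j ∈ Icc 2 n, (((n-j+1 : ℕ) : ℝ)*τ) ^ (b2-1) * (((j-1 : ℕ):ℝ)*τ) ^ (θ-1)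
      ≤ ((2:ℝ)^(1-b2)/θ + 2^(1-θ)/b2) * ((n:ℝ)*τ)^(b2+θ-1) := by
  rw [sum_reindex n (fun m => (((m : ℕ) : ℝ)*τ) ^ (b2-1)) (fun k => (((k:ℕ):ℝ)*τ) ^ (θ-1))]
  rw [Finset.mul_sum]
  calc ∑ k ∈ Icc 1 (n-1), τ * ((((n-k : ℕ) : ℝ)*τ) ^ (b2-1) * (((k:ℕ):ℝ)*τ) ^ (θ-1))
      = ∑ k ∈ Icc 1 (n-1), τ * (((n-k : ℕ) : ℝ)*τ) ^ (b2-1) * ((k:ℝ)*τ) ^ (θ-1) := by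
        apply Finset.sum_congr rfl; intros; push_cast; ring
    _ ≤ _ := beta_sum hb0 hb1 hθ0 hθ1 hτ n hn

lemma conv_inv {b2 τ : ℝ} (hb0 : 0 < b2) (hb1 : b2 < 1) (hτ : 0 < τ) (n : ℕ) (hn : 1 ≤ n) :
    τ * ∑ j ∈ Icc 2 n, (((n-j+1 : ℕ) : ℝ)*τ) ^ (b2-1) * ((((j-1 : ℕ)):ℝ)*τ)⁻¹
      ≤ ((2:ℝ)^(1-b2) * (1 + Real.log n) + 2/b2) * ((n:ℝ)*τ)^(b2-1) := by
  rw [sum_reindex n (fun m => (((m : ℕ) : ℝ)*τ) ^ (b2-1)) (fun k => ((((k:ℕ)):ℝ)*τ)⁻¹)]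
  rw [Finset.mul_sum]
  calc ∑ k ∈ Icc 1 (n-1), τ * ((((n-k : ℕ) : ℝ)*τ) ^ (b2-1) * (((k:ℕ):ℝ)*τ)⁻¹)
      = ∑ k ∈ Icc 1 (n-1), τ * (((n-k : ℕ) : ℝ)*τ) ^ (b2-1) * ((k:ℝ)*τ)⁻¹ := by
        apply Finset.sum_congr rfl; intros; push_cast; ring
    _ ≤ _ := log_sum hb0 hb1 hτ n hn

lemma conv_exp {b2 τ μ δ T : ℝ} (hb0 : 0 < b2) (hb1 : b2 < 1) (hτ : 0 < τ)
    (hμ : 0 ≤ μ) (hδ : 0 < δ) (hT : 0 < T) (n : ℕ) (hn : 1 ≤ n) (hnT : (n:ℝ)*τ ≤ T) :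
    τ * ∑ j ∈ Icc 2 n, (((n-j+1 : ℕ) : ℝ)*τ) ^ (b2-1) * Real.exp (μ*((((j-1:ℕ)):ℝ)*τ))
      ≤ Real.exp (μ*((n:ℝ)*τ)) * (δ^b2/b2 + Real.exp (-(μ*δ))*(T^b2/b2)) := by
  rw [sum_reindex n (fun m => (((m : ℕ) : ℝ)*τ) ^ (b2-1))
    (fun k => Real.exp (μ*((((k:ℕ)):ℝ)*τ)))]
  rw [Finset.mul_sum]
  calc ∑ k ∈ Icc 1 (n-1), τ * ((((n-k : ℕ) : ℝ)*τ) ^ (b2-1) * Real.exp (μ*(((k:ℕ):ℝ)*τ)))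
      = ∑ k ∈ Icc 1 (n-1), τ * (((n-k : ℕ) : ℝ)*τ) ^ (b2-1) * Real.exp (μ*((k:ℝ)*τ)) := by
        apply Finset.sum_congr rfl; intros; push_cast; ring
    _ ≤ _ := exp_sum hb0 hb1 hτ hμ hδ hT n hn hnT

lemma log_n_le {τ T : ℝ} (hτ : 0 < τ) (hT : 0 < T) (n : ℕ) (hn : 1 ≤ n)
    (hnT : (n:ℝ)*τ ≤ T) :
    1 + Real.log n ≤ (1 + max 0 (Real.log T)) * (1 + |Real.log τ|) := by
  have hn0 : (0:ℝ) < (n:ℝ) := by exact_mod_cast hn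
  have h1 : Real.log n = Real.log ((n:ℝ)*τ) - Real.log τ := by
    rw [Real.log_mul hn0.ne' hτ.ne']; ring
  have h2 : Real.log ((n:ℝ)*τ) ≤ Real.log T := Real.log_le_log (by positivity) hnT
  have h3 : Real.log n ≤ max 0 (Real.log T) + |Real.log τ| := by
    rw [h1]
    have := neg_abs_le (Real.log τ)
    have := le_max_right (0:ℝ) (Real.log T)
    linarith [le_max_right (0:ℝ) (Real.log T), neg_abs_le (Real.log τ),
      le_abs_self (Real.log τ)]
  have hm : (0:ℝ) ≤ max 0 (Real.log T) := le_max_left _ _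
  have hl : (0:ℝ) ≤ |Real.log τ| := abs_nonneg _
  nlinarith

lemma compare {T b τ b2 : ℝ} (hb : 0 ≤ b) (hτ : 0 < τ) (φ g h : ℕ → ℝ)
    (hφ : ∀ n : ℕ, 1 ≤ n → (n:ℝ)*τ ≤ T →
      φ n ≤ g n + b * τ * ∑ j ∈ Icc 2 n, (((n-j+1 : ℕ):ℝ)*τ)^(b2-1) * φ (j-1))
    (hsuper : ∀ n : ℕ, 1 ≤ n → (n:ℝ)*τ ≤ T →
      g n + b * τ * ∑ j ∈ Icc 2 n, (((n-j+1 : ℕ):ℝ)*τ)^(b2-1) * h (j-1) ≤ h n) :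
    ∀ n : ℕ, 1 ≤ n → (n:ℝ)*τ ≤ T → φ n ≤ h n := by
  intro n
  induction n using Nat.strong_induction_on with
  | _ n IH =>
    intro hn hnT
    have step : b * τ * ∑ j ∈ Icc 2 n, (((n-j+1 : ℕ):ℝ)*τ)^(b2-1) * φ (j-1)
        ≤ b * τ * ∑ j ∈ Icc 2 n, (((n-j+1 : ℕ):ℝ)*τ)^(b2-1) * h (j-1) := by
      apply mul_le_mul_of_nonneg_left ?_ (by positivity)
      apply Finset.sum_le_sum
      intro j hj
      simp only [Finset.mem_Icc] at hj
      have h1 : j - 1 < n := by omega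
      have h2 : 1 ≤ j - 1 := by omega
      have h3 : ((j-1 : ℕ):ℝ)*τ ≤ T := by
        have hc : ((j-1:ℕ):ℝ) ≤ (n:ℝ) := by exact_mod_cast h1.le
        nlinarith
      exact mul_le_mul_of_nonneg_left (IH _ h1 h2 h3) (by positivity)
    linarith [hφ n hn hnT, hsuper n hn hnT]


lemma Wfuel {b T b2 : ℝ} (hb : 0 ≤ b) (hT : 0 < T) (hb0 : 0 < b2) (hb1 : b2 < 1) :
    ∀ N : ℕ, ∀ θ : ℝ, 0 < θ → θ < 1 → 1 ≤ θ + N * b2 →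
    ∃ C : ℝ, 0 ≤ C ∧ ∀ τ : ℝ, 0 < τ → ∃ w : ℕ → ℝ,
      (∀ n : ℕ, 1 ≤ n → (n:ℝ)*τ ≤ T →
        ((n:ℝ)*τ)^(θ-1)
          + b * τ * ∑ j ∈ Icc 2 n, (((n-j+1 : ℕ):ℝ)*τ)^(b2-1) * w (j-1) ≤ w n)
      ∧ (∀ n : ℕ, 1 ≤ n → (n:ℝ)*τ ≤ T → w n ≤ C * ((n:ℝ)*τ)^(θ-1)) := by
  intro N
  induction N with
  | zero =>
    intro θ hθ0 hθ1 habs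
    exfalso
    simp only [Nat.cast_zero, zero_mul, add_zero] at habs
    linarith
  | succ N IH =>
    intro θ hθ0 hθ1 hθN
    obtain ⟨Q, hQdef⟩ : ∃ q : ℝ, q = max 1 T := ⟨_, rfl⟩
    have hQ1 : (1:ℝ) ≤ Q := hQdef ▸ le_max_left _ _
    have hQ0 : (0:ℝ) < Q := by linarith
    obtain ⟨D, hDdef⟩ : ∃ d : ℝ, d = (2:ℝ)^(1-b2)/θ + 2^(1-θ)/b2 := ⟨_, rfl⟩
    have hD0 : 0 < D := by
      rw [hDdef]
      have h1 : (0:ℝ) < (2:ℝ)^(1-b2) := Real.rpow_pos_of_pos (by norm_num) _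
      have h2 : (0:ℝ) < (2:ℝ)^(1-θ) := Real.rpow_pos_of_pos (by norm_num) _
      positivity
    by_cases hcase : 1 ≤ θ + b2
    · -- base construction with exponential weight
      obtain ⟨δ, hδdef⟩ : ∃ d : ℝ, d = (b2/(4*(b+1)))^(b2⁻¹) := ⟨_, rfl⟩
      have hδ0 : 0 < δ := hδdef ▸ Real.rpow_pos_of_pos (by positivity) _
      have hδb2 : δ^b2 = b2/(4*(b+1)) := by
        rw [hδdef, ← Real.rpow_mul (by positivity), inv_mul_cancel₀ hb0.ne', Real.rpow_one]
      obtain ⟨μ, hμdef⟩ : ∃ m : ℝ, m = 4*(b+1)*T^b2/(b2*δ) := ⟨_, rfl⟩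
      have hμ0 : 0 < μ := by
        rw [hμdef]
        have : (0:ℝ) < T^b2 := Real.rpow_pos_of_pos hT _
        positivity
      have hTb2 : (0:ℝ) < T^b2 := Real.rpow_pos_of_pos hT _
      have hμδ : μ*δ = 4*(b+1)*T^b2/b2 := by
        rw [hμdef]; field_simp
      have hsmall : b * (δ^b2/b2 + Real.exp (-(μ*δ))*(T^b2/b2)) ≤ 1/2 := by
        have h1 : b * (δ^b2/b2) ≤ 1/4 := by
          rw [hδb2]
          have he : b2/(4*(b+1))/b2 = 1/(4*(b+1)) := by
            rw [div_div, div_eq_div_iff (by positivity) (by positivity)]; ring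
          rw [he]
          rw [mul_one_div, div_le_iff₀ (by positivity)]
          linarith
        have h2 : b * (Real.exp (-(μ*δ))*(T^b2/b2)) ≤ 1/4 := by
          have hμδ0 : 0 < μ*δ := by positivity
          have hexp : Real.exp (-(μ*δ)) ≤ (μ*δ)⁻¹ := by
            rw [Real.exp_neg]
            apply inv_anti₀ hμδ0
            linarith [Real.add_one_le_exp (μ*δ)]
          have h3 : b * (Real.exp (-(μ*δ))*(T^b2/b2)) ≤ b * ((μ*δ)⁻¹*(T^b2/b2)) := by
            apply mul_le_mul_of_nonneg_left ?_ hb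
            exact mul_le_mul_of_nonneg_right hexp (by positivity)
          have h4 : b * ((μ*δ)⁻¹*(T^b2/b2)) = b/(4*(b+1)) := by
            rw [hμδ]; field_simp
          rw [h4] at h3
          have h5 : b/(4*(b+1)) ≤ 1/4 := by
            rw [div_le_iff₀ (by positivity)]; linarith
          linarith
        linarith [mul_add b (δ^b2/b2) (Real.exp (-(μ*δ))*(T^b2/b2)), h1, h2]
      obtain ⟨C₀, hC₀def⟩ : ∃ c : ℝ, c = 2*b*D*Q + 1 := ⟨_, rfl⟩
      have hC₀0 : 0 < C₀ := by rw [hC₀def]; positivity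
      refine ⟨1 + C₀ * Real.exp (μ*T) * Q, by positivity, ?_⟩
      intro τ hτ
      refine ⟨fun k => ((k:ℝ)*τ)^(θ-1) + C₀ * Real.exp (μ*((k:ℝ)*τ)), ?_, ?_⟩
      · intro n hn hnT
        show _ ≤ ((n:ℝ)*τ)^(θ-1) + C₀ * Real.exp (μ*((n:ℝ)*τ))
        have hnτ : (0:ℝ) < (n:ℝ)*τ := by
          have : (0:ℝ) < (n:ℝ) := by exact_mod_cast hn
          positivity
        have hsplit : ∑ j ∈ Icc 2 n, (((n-j+1 : ℕ):ℝ)*τ)^(b2-1) *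
            ((((j-1:ℕ):ℝ)*τ)^(θ-1) + C₀ * Real.exp (μ*(((j-1:ℕ):ℝ)*τ)))
            = (∑ j ∈ Icc 2 n, (((n-j+1 : ℕ):ℝ)*τ)^(b2-1) * (((j-1:ℕ):ℝ)*τ)^(θ-1))
            + C₀ * ∑ j ∈ Icc 2 n, (((n-j+1 : ℕ):ℝ)*τ)^(b2-1) *
                Real.exp (μ*(((j-1:ℕ):ℝ)*τ)) := by
          rw [Finset.mul_sum, ← Finset.sum_add_distrib]
          apply Finset.sum_congr rfl; intros; ring
        rw [hsplit]
        have h1 : b * τ * ∑ j ∈ Icc 2 n, (((n-j+1 : ℕ):ℝ)*τ)^(b2-1) * (((j-1:ℕ):ℝ)*τ)^(θ-1)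
            ≤ b * D * ((n:ℝ)*τ)^(b2+θ-1) := by
          have := conv_rpow hb0 hb1 hθ0 hθ1.le hτ n hn
          rw [← hDdef] at this
          calc b * τ * ∑ j ∈ Icc 2 n, (((n-j+1:ℕ):ℝ)*τ)^(b2-1) * (((j-1:ℕ):ℝ)*τ)^(θ-1)
              = b * (τ * ∑ j ∈ Icc 2 n, (((n-j+1:ℕ):ℝ)*τ)^(b2-1) * (((j-1:ℕ):ℝ)*τ)^(θ-1)) := by
                ring
            _ ≤ b * (D * ((n:ℝ)*τ)^(b2+θ-1)) := mul_le_mul_of_nonneg_left this hb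
            _ = b * D * ((n:ℝ)*τ)^(b2+θ-1) := by ring
        have h1' : b * D * ((n:ℝ)*τ)^(b2+θ-1) ≤ b * D * Q := by
          apply mul_le_mul_of_nonneg_left ?_ (by positivity)
          rw [hQdef]
          exact rpow_le_Q hnτ hnT (by linarith) (by linarith)
        have h2 : b * τ * (C₀ * ∑ j ∈ Icc 2 n, (((n-j+1 : ℕ):ℝ)*τ)^(b2-1) *
              Real.exp (μ*(((j-1:ℕ):ℝ)*τ)))
            ≤ C₀ * (Real.exp (μ*((n:ℝ)*τ)) * (1/2)) := by
          have hce := conv_exp hb0 hb1 hτ hμ0.le hδ0 hT n hn hnT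
          calc b * τ * (C₀ * ∑ j ∈ Icc 2 n, (((n-j+1 : ℕ):ℝ)*τ)^(b2-1) *
                Real.exp (μ*(((j-1:ℕ):ℝ)*τ)))
              = C₀ * (b * (τ * ∑ j ∈ Icc 2 n, (((n-j+1 : ℕ):ℝ)*τ)^(b2-1) *
                Real.exp (μ*(((j-1:ℕ):ℝ)*τ)))) := by ring
            _ ≤ C₀ * (b * (Real.exp (μ*((n:ℝ)*τ)) *
                (δ^b2/b2 + Real.exp (-(μ*δ))*(T^b2/b2)))) := by
                apply mul_le_mul_of_nonneg_left ?_ hC₀0.le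
                exact mul_le_mul_of_nonneg_left hce hb
            _ = C₀ * (Real.exp (μ*((n:ℝ)*τ)) *
                (b * (δ^b2/b2 + Real.exp (-(μ*δ))*(T^b2/b2)))) := by ring
            _ ≤ C₀ * (Real.exp (μ*((n:ℝ)*τ)) * (1/2)) := by
                apply mul_le_mul_of_nonneg_left ?_ hC₀0.le
                exact mul_le_mul_of_nonneg_left hsmall (Real.exp_nonneg _)
        have hexp1 : (1:ℝ) ≤ Real.exp (μ*((n:ℝ)*τ)) := by
          rw [Real.one_le_exp_iff]
          positivity
        have hC₀half : b*D*Q ≤ C₀/2 := by rw [hC₀def]; linarith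
        rw [mul_add]
        nlinarith [mul_nonneg hC₀0.le (sub_nonneg.mpr hexp1)]
      · intro n hn hnT
        show ((n:ℝ)*τ)^(θ-1) + C₀ * Real.exp (μ*((n:ℝ)*τ)) ≤ _
        have hnτ : (0:ℝ) < (n:ℝ)*τ := by
          have : (0:ℝ) < (n:ℝ) := by exact_mod_cast hn
          positivity
        have hpow : (0:ℝ) < ((n:ℝ)*τ)^(θ-1) := Real.rpow_pos_of_pos hnτ _
        have hexp : Real.exp (μ*((n:ℝ)*τ)) ≤ Real.exp (μ*T) :=
          Real.exp_le_exp.mpr (mul_le_mul_of_nonneg_left hnT hμ0.le)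
        have hone : ((n:ℝ)*τ)^(1-θ) * ((n:ℝ)*τ)^(θ-1) = 1 := by
          rw [← Real.rpow_add hnτ]
          norm_num
        have hQpow : ((n:ℝ)*τ)^(1-θ) ≤ Q := by
          rw [hQdef]; exact rpow_le_Q hnτ hnT (by linarith) (by linarith)
        have key : C₀ * Real.exp (μ*((n:ℝ)*τ)) ≤ C₀ * Real.exp (μ*T) * Q * ((n:ℝ)*τ)^(θ-1) := by
          have s1 : C₀ * Real.exp (μ*((n:ℝ)*τ)) ≤ C₀ * Real.exp (μ*T) :=
            mul_le_mul_of_nonneg_left hexp hC₀0.le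
          have s2 : C₀ * Real.exp (μ*T) = C₀ * Real.exp (μ*T) *
              (((n:ℝ)*τ)^(1-θ) * ((n:ℝ)*τ)^(θ-1)) := by
            rw [hone]; ring
          have s3 : C₀ * Real.exp (μ*T) * (((n:ℝ)*τ)^(1-θ) * ((n:ℝ)*τ)^(θ-1))
              ≤ C₀ * Real.exp (μ*T) * (Q * ((n:ℝ)*τ)^(θ-1)) := by
            apply mul_le_mul_of_nonneg_left ?_ (by positivity)
            exact mul_le_mul_of_nonneg_right hQpow hpow.le
          linarith [s1, s3, s2.le, s2.ge]
        have expand : (1 + C₀*Real.exp (μ*T)*Q) * ((n:ℝ)*τ)^(θ-1)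
            = ((n:ℝ)*τ)^(θ-1) + C₀*Real.exp (μ*T)*Q*((n:ℝ)*τ)^(θ-1) := by ring
        linarith [key, expand.le, expand.ge]
    · -- recursive case
      push_neg at hcase
      have hθ'0 : 0 < θ + b2 := by linarith
      have hθ'1 : θ + b2 < 1 := hcase
      have hθ'N : 1 ≤ (θ + b2) + N * b2 := by
        push_cast at hθN ⊢
        linarith
      obtain ⟨C', hC'0, hw'⟩ := IH (θ + b2) hθ'0 hθ'1 hθ'N
      refine ⟨1 + b * D * C' * Q, by positivity, ?_⟩
      intro τ hτ
      obtain ⟨w', hw'super, hw'bound⟩ := hw' τ hτ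
      refine ⟨fun k => ((k:ℝ)*τ)^(θ-1) + (b*D) * w' k, ?_, ?_⟩
      · intro n hn hnT
        show _ ≤ ((n:ℝ)*τ)^(θ-1) + (b*D) * w' n
        have hnτ : (0:ℝ) < (n:ℝ)*τ := by
          have : (0:ℝ) < (n:ℝ) := by exact_mod_cast hn
          positivity
        have hsplit : ∑ j ∈ Icc 2 n, (((n-j+1 : ℕ):ℝ)*τ)^(b2-1) *
            ((((j-1:ℕ):ℝ)*τ)^(θ-1) + (b*D) * w' (j-1))
            = (∑ j ∈ Icc 2 n, (((n-j+1 : ℕ):ℝ)*τ)^(b2-1) * (((j-1:ℕ):ℝ)*τ)^(θ-1))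
            + (b*D) * ∑ j ∈ Icc 2 n, (((n-j+1 : ℕ):ℝ)*τ)^(b2-1) * w' (j-1) := by
          rw [Finset.mul_sum, ← Finset.sum_add_distrib]
          apply Finset.sum_congr rfl; intros; ring
        rw [hsplit]
        have h1 : b * τ * ∑ j ∈ Icc 2 n, (((n-j+1 : ℕ):ℝ)*τ)^(b2-1) * (((j-1:ℕ):ℝ)*τ)^(θ-1)
            ≤ b * D * ((n:ℝ)*τ)^((θ+b2)-1) := by
          have := conv_rpow hb0 hb1 hθ0 hθ1.le hτ n hn
          rw [← hDdef] at this
          have heq : b2+θ-1 = (θ+b2)-1 := by ring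
          rw [heq] at this
          calc b * τ * ∑ j ∈ Icc 2 n, (((n-j+1:ℕ):ℝ)*τ)^(b2-1) * (((j-1:ℕ):ℝ)*τ)^(θ-1)
              = b * (τ * ∑ j ∈ Icc 2 n, (((n-j+1:ℕ):ℝ)*τ)^(b2-1) * (((j-1:ℕ):ℝ)*τ)^(θ-1)) := by
                ring
            _ ≤ b * (D * ((n:ℝ)*τ)^((θ+b2)-1)) := mul_le_mul_of_nonneg_left this hb
            _ = b * D * ((n:ℝ)*τ)^((θ+b2)-1) := by ring
        have h2 : b * τ * ((b*D) * ∑ j ∈ Icc 2 n, (((n-j+1 : ℕ):ℝ)*τ)^(b2-1) * w' (j-1))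
            ≤ (b*D) * (w' n - ((n:ℝ)*τ)^((θ+b2)-1)) := by
          have := hw'super n hn hnT
          have h3 : b * τ * ∑ j ∈ Icc 2 n, (((n-j+1 : ℕ):ℝ)*τ)^(b2-1) * w' (j-1)
              ≤ w' n - ((n:ℝ)*τ)^((θ+b2)-1) := by linarith
          calc b * τ * ((b*D) * ∑ j ∈ Icc 2 n, (((n-j+1 : ℕ):ℝ)*τ)^(b2-1) * w' (j-1))
              = (b*D) * (b * τ * ∑ j ∈ Icc 2 n, (((n-j+1 : ℕ):ℝ)*τ)^(b2-1) * w' (j-1)) := by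
                ring
            _ ≤ (b*D) * (w' n - ((n:ℝ)*τ)^((θ+b2)-1)) :=
                mul_le_mul_of_nonneg_left h3 (by positivity)
        rw [mul_add]
        have h8 : (b*D) * (w' n - ((n:ℝ)*τ)^((θ+b2)-1))
            = (b*D) * w' n - b*D*((n:ℝ)*τ)^((θ+b2)-1) := by ring
        linarith [h1, h2, h8.le, h8.ge]
      · intro n hn hnT
        show ((n:ℝ)*τ)^(θ-1) + (b*D) * w' n ≤ _
        have hnτ : (0:ℝ) < (n:ℝ)*τ := by
          have : (0:ℝ) < (n:ℝ) := by exact_mod_cast hn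
          positivity
        have hpow : (0:ℝ) < ((n:ℝ)*τ)^(θ-1) := Real.rpow_pos_of_pos hnτ _
        have hb2Q : ((n:ℝ)*τ)^b2 ≤ Q := by
          rw [hQdef]; exact rpow_le_Q hnτ hnT hb0.le hb1.le
        have heq : ((n:ℝ)*τ)^((θ+b2)-1) = ((n:ℝ)*τ)^(θ-1) * ((n:ℝ)*τ)^b2 := by
          rw [← Real.rpow_add hnτ]; ring_nf
        have hbnd := hw'bound n hn hnT
        have h4 : (b*D) * w' n ≤ (b*D) * (C' * (((n:ℝ)*τ)^(θ-1) * ((n:ℝ)*τ)^b2)) := by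
          rw [← heq]
          exact mul_le_mul_of_nonneg_left hbnd (by positivity)
        have h5 : (b*D) * (C' * (((n:ℝ)*τ)^(θ-1) * ((n:ℝ)*τ)^b2))
            = b*D*C'*((n:ℝ)*τ)^(θ-1) * ((n:ℝ)*τ)^b2 := by ring
        have h6 : b*D*C'*((n:ℝ)*τ)^(θ-1) * ((n:ℝ)*τ)^b2
            ≤ b*D*C'*((n:ℝ)*τ)^(θ-1) * Q :=
          mul_le_mul_of_nonneg_left hb2Q (by positivity)
        have h7 : (1 + b*D*C'*Q) * ((n:ℝ)*τ)^(θ-1)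
            = ((n:ℝ)*τ)^(θ-1) + b*D*C'*((n:ℝ)*τ)^(θ-1) * Q := by ring
        linarith [h4, h5.le, h5.ge, h6, h7.le, h7.ge]


lemma Wlem {b T b2 : ℝ} (hb : 0 ≤ b) (hT : 0 < T) (hb0 : 0 < b2) (hb1 : b2 < 1)
    (θ : ℝ) (hθ0 : 0 < θ) (hθ1 : θ < 1) :
    ∃ C : ℝ, 0 ≤ C ∧ ∀ τ : ℝ, 0 < τ → ∃ w : ℕ → ℝ,
      (∀ n : ℕ, 1 ≤ n → (n:ℝ)*τ ≤ T →
        ((n:ℝ)*τ)^(θ-1)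
          + b * τ * ∑ j ∈ Icc 2 n, (((n-j+1 : ℕ):ℝ)*τ)^(b2-1) * w (j-1) ≤ w n)
      ∧ (∀ n : ℕ, 1 ≤ n → (n:ℝ)*τ ≤ T → w n ≤ C * ((n:ℝ)*τ)^(θ-1)) := by
  obtain ⟨N, hN⟩ := exists_nat_ge ((1-θ)/b2)
  apply Wfuel hb hT hb0 hb1 N θ hθ0 hθ1
  rw [div_le_iff₀ hb0] at hN
  linarith

/-- Discrete Gronwall inequality with weakly singular kernel and singular right-hand side
(paper Lemma 6.2): if `0 ≤ φⁿ ≤ R` and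
`φⁿ ≤ a₁ t_n⁻¹ + a₂ t_n^{β₁-1} + b τ Σ_{j=2}^n t_{n-j+1}^{β₂-1} φ^{j-1}` on `0 < t_n ≤ T`,
then `φⁿ ≤ c (a₁ t_n⁻¹ (1 + |log τ|) + a₂ t_n^{β₁-1})` with `c = c(b,β₁,β₂,T,R)`
independent of `τ`, `n`, `a₁`, `a₂`. -/
theorem stmt_7 (T : ℝ) (hT : 0 < T) (β₁ β₂ : ℝ)
    (hβ₁0 : 0 < β₁) (hβ₁1 : β₁ < 1) (hβ₂0 : 0 < β₂) (hβ₂1 : β₂ < 1)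
    (b R : ℝ) (hb : 0 ≤ b) (hR : 0 < R) :
    ∃ c : ℝ, 0 < c ∧ ∀ τ : ℝ, 0 < τ → ∀ a₁ a₂ : ℝ, 0 ≤ a₁ → 0 ≤ a₂ →
      ∀ φ : ℕ → ℝ,
        (∀ n : ℕ, 1 ≤ n → (n : ℝ) * τ ≤ T → 0 ≤ φ n ∧ φ n ≤ R) →
        (∀ n : ℕ, 1 ≤ n → (n : ℝ) * τ ≤ T →
          φ n ≤ a₁ * ((n : ℝ) * τ)⁻¹ + a₂ * ((n : ℝ) * τ) ^ (β₁ - 1)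
            + b * τ * ∑ j ∈ Finset.Icc 2 n,
                (((n - j + 1 : ℕ) : ℝ) * τ) ^ (β₂ - 1) * φ (j - 1)) →
        ∀ n : ℕ, 1 ≤ n → (n : ℝ) * τ ≤ T →
          φ n ≤ c * (a₁ * ((n : ℝ) * τ)⁻¹ * (1 + |Real.log τ|)
            + a₂ * ((n : ℝ) * τ) ^ (β₁ - 1)) := by
  obtain ⟨Cw, hCw0, hw⟩ := Wlem hb hT hβ₂0 hβ₂1 β₂ hβ₂0 hβ₂1
  obtain ⟨Cv, hCv0, hv⟩ := Wlem hb hT hβ₂0 hβ₂1 β₁ hβ₁0 hβ₁1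
  obtain ⟨Q, hQdef⟩ : ∃ q : ℝ, q = max 1 T := ⟨_, rfl⟩
  have hQ1 : (1:ℝ) ≤ Q := hQdef ▸ le_max_left _ _
  have hQ0 : (0:ℝ) < Q := by linarith
  obtain ⟨σ, hσdef⟩ : ∃ s : ℝ,
      s = b*((2:ℝ)^(1-β₂) + 2/β₂)*(1 + max 0 (Real.log T)) := ⟨_, rfl⟩
  have hσ0 : 0 ≤ σ := by
    rw [hσdef]
    have h1 : (0:ℝ) < (2:ℝ)^(1-β₂) := Real.rpow_pos_of_pos (by norm_num) _
    have h2 : (0:ℝ) ≤ max 0 (Real.log T) := le_max_left _ _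
    positivity
  refine ⟨1 + σ*Cw*Q + Cv, by positivity, ?_⟩
  intro τ hτ a₁ a₂ ha₁ ha₂ φ _ hφ
  obtain ⟨w, hwsuper, hwbound⟩ := hw τ hτ
  obtain ⟨v, hvsuper, hvbound⟩ := hv τ hτ
  obtain ⟨L, hLdef⟩ : ∃ l : ℝ, l = 1 + |Real.log τ| := ⟨_, rfl⟩
  have hL1 : (1:ℝ) ≤ L := by
    rw [hLdef]
    have := abs_nonneg (Real.log τ)
    linarith
  have hL0 : (0:ℝ) < L := by linarith
  obtain ⟨h, hdef⟩ : ∃ h : ℕ → ℝ, ∀ k : ℕ,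
      h k = a₁*((((k:ℕ):ℝ)*τ)⁻¹ + L*σ*w k) + a₂*v k := ⟨_, fun k => rfl⟩
  have hsuper : ∀ n : ℕ, 1 ≤ n → (n:ℝ)*τ ≤ T →
      (a₁ * ((n : ℝ) * τ)⁻¹ + a₂ * ((n : ℝ) * τ) ^ (β₁ - 1))
        + b * τ * ∑ j ∈ Icc 2 n, (((n-j+1 : ℕ):ℝ)*τ)^(β₂-1) * h (j-1) ≤ h n := by
    intro n hn hnT
    have hnτ : (0:ℝ) < (n:ℝ)*τ := by
      have : (0:ℝ) < (n:ℝ) := by exact_mod_cast hn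
      positivity
    have hsplit : ∑ j ∈ Icc 2 n, (((n-j+1 : ℕ):ℝ)*τ)^(β₂-1) * h (j-1)
        = a₁ * ∑ j ∈ Icc 2 n, (((n-j+1 : ℕ):ℝ)*τ)^(β₂-1) * ((((j-1:ℕ):ℝ)*τ)⁻¹)
        + a₁*L*σ * ∑ j ∈ Icc 2 n, (((n-j+1 : ℕ):ℝ)*τ)^(β₂-1) * w (j-1)
        + a₂ * ∑ j ∈ Icc 2 n, (((n-j+1 : ℕ):ℝ)*τ)^(β₂-1) * v (j-1) := by
      rw [Finset.mul_sum, Finset.mul_sum, Finset.mul_sum,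
        ← Finset.sum_add_distrib, ← Finset.sum_add_distrib]
      apply Finset.sum_congr rfl
      intro j hj
      rw [hdef]
      ring
    have e1 : b * (τ * ∑ j ∈ Icc 2 n, (((n-j+1 : ℕ):ℝ)*τ)^(β₂-1) * ((((j-1:ℕ):ℝ)*τ)⁻¹))
        ≤ σ * L * ((n:ℝ)*τ)^(β₂-1) := by
      have hci := conv_inv hβ₂0 hβ₂1 hτ n hn
      have hln := log_n_le hτ hT n hn hnT
      have hlogn : (0:ℝ) ≤ Real.log n := by
        apply Real.log_nonneg
        exact_mod_cast hn
      have h2b : (0:ℝ) < (2:ℝ)^(1-β₂) := Real.rpow_pos_of_pos (by norm_num) _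
      have hpow2 : (0:ℝ) < ((n:ℝ)*τ)^(β₂-1) := Real.rpow_pos_of_pos hnτ _
      have step1 : ((2:ℝ)^(1-β₂) * (1 + Real.log n) + 2/β₂)
          ≤ ((2:ℝ)^(1-β₂) + 2/β₂) * (1 + Real.log n) := by
        have : (1:ℝ) ≤ 1 + Real.log n := by linarith
        have h2β : (0:ℝ) ≤ 2/β₂ := by positivity
        nlinarith
      have step2 : ((2:ℝ)^(1-β₂) + 2/β₂) * (1 + Real.log n)
          ≤ ((2:ℝ)^(1-β₂) + 2/β₂) * ((1 + max 0 (Real.log T)) * L) := by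
        rw [hLdef]
        apply mul_le_mul_of_nonneg_left hln (by positivity)
      calc b * (τ * ∑ j ∈ Icc 2 n, (((n-j+1 : ℕ):ℝ)*τ)^(β₂-1) * ((((j-1:ℕ):ℝ)*τ)⁻¹))
          ≤ b * (((2:ℝ)^(1-β₂) * (1 + Real.log n) + 2/β₂) * ((n:ℝ)*τ)^(β₂-1)) :=
            mul_le_mul_of_nonneg_left hci hb
        _ ≤ b * ((((2:ℝ)^(1-β₂) + 2/β₂) * ((1 + max 0 (Real.log T)) * L)) * ((n:ℝ)*τ)^(β₂-1)) := by
            apply mul_le_mul_of_nonneg_left ?_ hb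
            apply mul_le_mul_of_nonneg_right ?_ hpow2.le
            exact le_trans step1 step2
        _ = σ * L * ((n:ℝ)*τ)^(β₂-1) := by rw [hσdef]; ring
    have e2 : b * τ * ∑ j ∈ Icc 2 n, (((n-j+1 : ℕ):ℝ)*τ)^(β₂-1) * w (j-1)
        ≤ w n - ((n:ℝ)*τ)^(β₂-1) := by linarith [hwsuper n hn hnT]
    have e3 : b * τ * ∑ j ∈ Icc 2 n, (((n-j+1 : ℕ):ℝ)*τ)^(β₂-1) * v (j-1)
        ≤ v n - ((n:ℝ)*τ)^(β₁-1) := by linarith [hvsuper n hn hnT]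
    have m1 : a₁ * (b * (τ * ∑ j ∈ Icc 2 n, (((n-j+1 : ℕ):ℝ)*τ)^(β₂-1) * ((((j-1:ℕ):ℝ)*τ)⁻¹)))
        ≤ a₁ * (σ * L * ((n:ℝ)*τ)^(β₂-1)) := mul_le_mul_of_nonneg_left e1 ha₁
    have m2 : (a₁*L*σ) * (b * τ * ∑ j ∈ Icc 2 n, (((n-j+1 : ℕ):ℝ)*τ)^(β₂-1) * w (j-1))
        ≤ (a₁*L*σ) * (w n - ((n:ℝ)*τ)^(β₂-1)) :=
      mul_le_mul_of_nonneg_left e2 (by positivity)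
    have m3 : a₂ * (b * τ * ∑ j ∈ Icc 2 n, (((n-j+1 : ℕ):ℝ)*τ)^(β₂-1) * v (j-1))
        ≤ a₂ * (v n - ((n:ℝ)*τ)^(β₁-1)) := mul_le_mul_of_nonneg_left e3 ha₂
    rw [hsplit, hdef n]
    linarith [m1, m2, m3]
  have hcomp := compare (T := T) hb hτ φ
    (fun n => a₁ * ((n : ℝ) * τ)⁻¹ + a₂ * ((n : ℝ) * τ) ^ (β₁ - 1)) h hφ hsuper
  intro n hn hnT
  have hnτ : (0:ℝ) < (n:ℝ)*τ := by
    have : (0:ℝ) < (n:ℝ) := by exact_mod_cast hn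
    positivity
  have hinv : (0:ℝ) < ((n:ℝ)*τ)⁻¹ := by positivity
  have hp1 : (0:ℝ) < ((n:ℝ)*τ)^(β₁-1) := Real.rpow_pos_of_pos hnτ _
  have hp2 : (0:ℝ) < ((n:ℝ)*τ)^(β₂-1) := Real.rpow_pos_of_pos hnτ _
  have ht2 : ((n:ℝ)*τ)^(β₂-1) ≤ Q * ((n:ℝ)*τ)⁻¹ := by
    have heq : ((n:ℝ)*τ)^(β₂-1) = ((n:ℝ)*τ)^β₂ * ((n:ℝ)*τ)⁻¹ := by
      rw [Real.rpow_sub_one hnτ.ne', div_eq_mul_inv]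
    rw [heq]
    apply mul_le_mul_of_nonneg_right ?_ hinv.le
    rw [hQdef]
    exact rpow_le_Q hnτ hnT hβ₂0.le hβ₂1.le
  have hwb := hwbound n hn hnT
  have hvb := hvbound n hn hnT
  have key : h n ≤ (1 + σ*Cw*Q + Cv) * (a₁ * ((n:ℝ)*τ)⁻¹ * L + a₂ * ((n:ℝ)*τ)^(β₁-1)) := by
    rw [hdef n]
    have t1 : a₁*L*σ*(w n) ≤ a₁*L*σ*(Cw * ((n:ℝ)*τ)^(β₂-1)) :=
      mul_le_mul_of_nonneg_left hwb (by positivity)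
    have t2 : a₁*L*σ*(Cw * ((n:ℝ)*τ)^(β₂-1)) ≤ a₁*L*σ*(Cw * (Q * ((n:ℝ)*τ)⁻¹)) := by
      apply mul_le_mul_of_nonneg_left ?_ (by positivity)
      exact mul_le_mul_of_nonneg_left ht2 hCw0
    have t3 : a₂*(v n) ≤ a₂*(Cv*((n:ℝ)*τ)^(β₁-1)) := mul_le_mul_of_nonneg_left hvb ha₂
    have t4 : a₁*((n:ℝ)*τ)⁻¹ ≤ a₁*((n:ℝ)*τ)⁻¹*L := by
      nlinarith [mul_nonneg ha₁ hinv.le]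
    have e5 : a₁*L*σ*(Cw * (Q * ((n:ℝ)*τ)⁻¹)) = σ*Cw*Q*(a₁*((n:ℝ)*τ)⁻¹*L) := by ring
    have e6 : (1 + σ*Cw*Q + Cv) * (a₁ * ((n:ℝ)*τ)⁻¹ * L + a₂ * ((n:ℝ)*τ)^(β₁-1))
        = a₁ * ((n:ℝ)*τ)⁻¹ * L + a₂ * ((n:ℝ)*τ)^(β₁-1)
          + σ*Cw*Q*(a₁ * ((n:ℝ)*τ)⁻¹ * L) + σ*Cw*Q*(a₂ * ((n:ℝ)*τ)^(β₁-1))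
          + Cv*(a₁ * ((n:ℝ)*τ)⁻¹ * L) + Cv*(a₂ * ((n:ℝ)*τ)^(β₁-1)) := by ring
    have n1 : (0:ℝ) ≤ a₂ * ((n:ℝ)*τ)^(β₁-1) := by positivity
    have n2 : (0:ℝ) ≤ σ*Cw*Q*(a₂ * ((n:ℝ)*τ)^(β₁-1)) := by positivity
    have n3 : (0:ℝ) ≤ Cv*(a₁ * ((n:ℝ)*τ)⁻¹ * L) := by positivity
    have e7 : a₁*(((n:ℝ)*τ)⁻¹ + L*σ*w n) + a₂*v n
        = a₁*((n:ℝ)*τ)⁻¹ + a₁*L*σ*(w n) + a₂*(v n) := by ring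
    linarith [t1, t2, t3, t4, e5.le, e5.ge, e6.le, e6.ge, e7.le, e7.ge, n1, n2, n3]
  calc φ n ≤ h n := hcomp n hn hnT
    _ ≤ _ := by
      rw [hLdef] at key
      exact key

end GronwallAux
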